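/- Let h : ℝ → ℝ be a positive smooth function of the form h(t) = c₁ e^{kt} + c₂ e^{-kt} with k = √(1 + 2/(q-n)) ≠ 0 (q, n integers, q ≠ n), and suppose -h''h - (q-n-1)(h')² + (q-n-2)h h' = c₀ identically for a constant c₀. Then c₁ = c₂ = 0, a contradiction with positivity; hence no such positive h exists when k ≠ 0. -/

import Mathlib

theorem stmt_8 (q n : ℤ) (c₁ c₂ c₀ k : ℝ) (h : ℝ → ℝ)
    (hqn0 : q - n ≠ 0) (hqn2 : q - n ≠ -2)
    (hk : k = Real.sqrt (1 + 2 / ((q - n : ℤ) : ℝ))) (hk0 : k ≠ 0)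
    (hdef : ∀ t : ℝ, h t = c₁ * Real.exp (k * t) + c₂ * Real.exp (-(k * t)))
    (hpos : ∀ t : ℝ, 0 < h t)
    (hconst : ∀ t : ℝ,
      -(deriv (deriv h) t) * h t - ((q - n - 1 : ℤ) : ℝ) * (deriv h t) ^ 2
        + ((q - n - 2 : ℤ) : ℝ) * h t * deriv h t = c₀) :
    False := by
  set m : ℝ := ((q - n : ℤ) : ℝ) with hmdef
  have hm : m ≠ 0 := by
    simpa [hmdef] using (Int.cast_ne_zero (α := ℝ)).mpr hqn0
  have hm2 : m + 2 ≠ 0 := by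
    intro hc
    have h' : ((q - n : ℤ) : ℝ) = ((-2 : ℤ) : ℝ) := by
      rw [← hmdef]; push_cast; linarith
    exact hqn2 (by exact_mod_cast h')
  have hx : 0 < 1 + 2 / m := by
    by_contra hc
    push_neg at hc
    exact hk0 (hk.trans (Real.sqrt_eq_zero_of_nonpos hc))
  have hk2 : k ^ 2 = 1 + 2 / m := by
    rw [hk]; exact Real.sq_sqrt hx.le
  have hmk2 : m * k ^ 2 = m + 2 := by
    field_simp [hm] at hk2
    linarith
  -- derivatives
  have hd : ∀ t, HasDerivAt h
      (k * c₁ * Real.exp (k * t) - k * c₂ * Real.exp (-(k * t))) t := by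
    intro t
    have h1 : HasDerivAt (fun t : ℝ => k * t) k t := by
      simpa using (hasDerivAt_id t).const_mul k
    have h2 := h1.exp
    have h3 := (h1.neg).exp
    have h4 := (h2.const_mul c₁).add (h3.const_mul c₂)
    have hfun : h = fun t => c₁ * Real.exp (k * t) + c₂ * Real.exp (-(k * t)) :=
      funext hdef
    rw [hfun]
    refine h4.congr_deriv ?_
    simp only [Pi.neg_apply]; ring
  have hderiv : deriv h = fun t => k * c₁ * Real.exp (k * t) - k * c₂ * Real.exp (-(k * t)) :=
    funext fun t => (hd t).deriv
  have hderivt : ∀ t, deriv h t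
      = k * c₁ * Real.exp (k * t) - k * c₂ * Real.exp (-(k * t)) :=
    fun t => (hd t).deriv
  have hd2 : ∀ t, HasDerivAt (deriv h)
      (k ^ 2 * c₁ * Real.exp (k * t) + k ^ 2 * c₂ * Real.exp (-(k * t))) t := by
    intro t
    have h1 : HasDerivAt (fun t : ℝ => k * t) k t := by
      simpa using (hasDerivAt_id t).const_mul k
    have h2 := h1.exp
    have h3 := (h1.neg).exp
    have h4 := (h2.const_mul (k * c₁)).sub (h3.const_mul (k * c₂))
    rw [hderiv]
    refine h4.congr_deriv ?_
    simp only [Pi.neg_apply]; ring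
  have hderiv2 : ∀ t, deriv (deriv h) t
      = k ^ 2 * c₁ * Real.exp (k * t) + k ^ 2 * c₂ * Real.exp (-(k * t)) :=
    fun t => (hd2 t).deriv
  -- cast constants
  have hc1 : ((q - n - 1 : ℤ) : ℝ) = m - 1 := by rw [hmdef]; push_cast; ring
  have hc2 : ((q - n - 2 : ℤ) : ℝ) = m - 2 := by rw [hmdef]; push_cast; ring
  set A : ℝ := c₁ ^ 2 * ((m - 2) * k - m * k ^ 2) with hA
  set B : ℝ := c₂ ^ 2 * (-(m * k ^ 2) - (m - 2) * k) with hB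
  set C : ℝ := 2 * c₁ * c₂ * k ^ 2 * (m - 2) with hC
  have key : ∀ t : ℝ,
      A * Real.exp (k * t) ^ 2 + B * Real.exp (-(k * t)) ^ 2 + C = c₀ := by
    intro t
    have e1 := hconst t
    rw [hdef t, hderiv2 t, hc1, hc2, hderivt t] at e1
    have huv : Real.exp (k * t) * Real.exp (-(k * t)) = 1 := by
      rw [← Real.exp_add]; simp
    rw [hA, hB, hC]
    linear_combination e1 - (2 * c₁ * c₂ * k ^ 2 * (m - 2)) * huv
  have k00 : A + B + C = c₀ := by
    have := key 0
    simpa using this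
  have k01 : A * Real.exp k ^ 2 + B * Real.exp (-k) ^ 2 + C = c₀ := by
    have := key 1
    simpa using this
  have k02 : A * Real.exp (-k) ^ 2 + B * Real.exp k ^ 2 + C = c₀ := by
    have := key (-1)
    simpa [mul_neg_one, neg_neg] using this
  obtain ⟨E, hE⟩ : ∃ E, Real.exp k = E := ⟨_, rfl⟩
  obtain ⟨E', hE'⟩ : ∃ E', Real.exp (-k) = E' := ⟨_, rfl⟩
  rw [hE, hE'] at k01 k02
  have hEE' : E * E' = 1 := by
    rw [← hE, ← hE', ← Real.exp_add]; simp
  have hEpos : 0 < E := hE ▸ Real.exp_pos k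
  have hE'pos : 0 < E' := hE' ▸ Real.exp_pos (-k)
  have hEne : E ≠ E' := by
    intro hc
    apply hk0
    have := Real.exp_injective (hE.trans (hc.trans hE'.symm))
    linarith
  have hAB : A = B := by
    have hsub : (A - B) * (E ^ 2 - E' ^ 2) = 0 := by
      linear_combination k01 - k02
    rcases mul_eq_zero.mp hsub with h1 | h1
    · linarith
    · exfalso
      have h5 : (E - E') * (E + E') = 0 := by linear_combination h1
      rcases mul_eq_zero.mp h5 with h6 | h6
      · exact hEne (by linarith)
      · linarith
  have hEsq : 0 < (E - E') ^ 2 := by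
    have hne := sub_ne_zero.mpr hEne
    positivity
  have hA0 : A = 0 := by
    rw [hAB] at k01 k00
    have h1 : B * (E ^ 2 + E' ^ 2 - 2) = 0 := by linear_combination k01 - k00
    have h2 : 0 < E ^ 2 + E' ^ 2 - 2 := by nlinarith [hEsq, hEE']
    rcases mul_eq_zero.mp h1 with h3 | h3
    · rw [hAB]; exact h3
    · linarith
  have hB0 : B = 0 := hAB ▸ hA0
  -- the factors are nonzero
  have hsix : ∀ x : ℝ, x = m → ¬ (6 * x = 4) := by
    intro x hxm hc
    rw [hxm, hmdef] at hc
    have h' : ((6 * (q - n) : ℤ) : ℝ) = ((4 : ℤ) : ℝ) := by push_cast at hc ⊢; linarith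
    have : (6 * (q - n) : ℤ) = 4 := by exact_mod_cast h'
    omega
  have hquad : (m - 2) ^ 2 - m * (m + 2) ≠ 0 := by
    intro h4
    have h5 : 6 * m = 4 := by linear_combination -h4
    exact hsix m rfl h5
  have hfac1 : (m - 2) * k - m * k ^ 2 ≠ 0 := by
    intro heq
    have h1 : (m - 2) * k = m + 2 := by linarith [hmk2]
    have h2 : (m - 2) ^ 2 * k ^ 2 = (m + 2) ^ 2 := by
      calc (m - 2) ^ 2 * k ^ 2 = ((m - 2) * k) ^ 2 := by ring
        _ = (m + 2) ^ 2 := by rw [h1]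
    have h3 : (m + 2) * ((m - 2) ^ 2 - m * (m + 2)) = 0 := by
      linear_combination m * h2 - (m - 2) ^ 2 * hmk2
    rcases mul_eq_zero.mp h3 with h | h
    · exact hm2 h
    · exact hquad h
  have hfac2 : -(m * k ^ 2) - (m - 2) * k ≠ 0 := by
    intro heq
    have h1 : (m - 2) * k = -(m + 2) := by linarith [hmk2]
    have h2 : (m - 2) ^ 2 * k ^ 2 = (m + 2) ^ 2 := by
      calc (m - 2) ^ 2 * k ^ 2 = ((m - 2) * k) ^ 2 := by ring
        _ = (m + 2) ^ 2 := by rw [h1]; ring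
    have h3 : (m + 2) * ((m - 2) ^ 2 - m * (m + 2)) = 0 := by
      linear_combination m * h2 - (m - 2) ^ 2 * hmk2
    rcases mul_eq_zero.mp h3 with h | h
    · exact hm2 h
    · exact hquad h
  have hc10 : c₁ = 0 := by
    rw [hA] at hA0
    rcases mul_eq_zero.mp hA0 with h1 | h1
    · exact pow_eq_zero_iff (two_ne_zero) |>.mp h1
    · exact absurd h1 hfac1
  have hc20 : c₂ = 0 := by
    rw [hB] at hB0
    rcases mul_eq_zero.mp hB0 with h1 | h1
    · exact pow_eq_zero_iff (two_ne_zero) |>.mp h1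
    · exact absurd h1 hfac2
  have hp := hpos 0
  rw [hdef 0, hc10, hc20] at hp
  simp at hp
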